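/- Let K ⊆ ℝ be a nonempty compact set, let m be a natural number, and let f : K × ℝ^m → ℝ be continuous such that for each λ ∈ K the function x ↦ f(λ, x) is strictly convex on ℝ^m. Then the function F(x) := sup_{λ ∈ K} f(λ, x) is strictly convex on ℝ^m. -/

import Mathlib

open Real Set

theorem stmt_14 (K : Set ℝ) (hKne : K.Nonempty) (hKcomp : IsCompact K)
    (m : ℕ) (f : ℝ → (Fin m → ℝ) → ℝ)
    (hcont : ContinuousOn (fun p : ℝ × (Fin m → ℝ) => f p.1 p.2) (K ×ˢ Set.univ))
    (hconv : ∀ lam ∈ K, StrictConvexOn ℝ Set.univ (f lam)) :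
    StrictConvexOn ℝ Set.univ (fun x : Fin m → ℝ => sSup ((fun lam => f lam x) '' K)) := by
  have hc : ∀ w : Fin m → ℝ, ContinuousOn (fun lam => f lam w) K := by
    intro w
    have : ContinuousOn ((fun p : ℝ × (Fin m → ℝ) => f p.1 p.2) ∘ (fun lam => (lam, w))) K :=
      hcont.comp (continuousOn_id.prodMk continuousOn_const)
        (fun lam hlam => ⟨hlam, mem_univ _⟩)
    exact this
  have hbdd : ∀ w : Fin m → ℝ, BddAbove ((fun lam => f lam w) '' K) := fun w =>
    (hKcomp.image_of_continuousOn (hc w)).bddAbove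
  refine ⟨convex_univ, ?_⟩
  intro x _ y _ hxy a b ha hb hab
  set z := a • x + b • y with hz
  obtain ⟨lam, hlamK, hmax⟩ := hKcomp.exists_isMaxOn hKne (hc z)
  have hsup : sSup ((fun lam => f lam z) '' K) = f lam z := by
    apply IsGreatest.csSup_eq
    exact ⟨⟨lam, hlamK, rfl⟩, fun v hv => by
      obtain ⟨u, huK, rfl⟩ := hv; exact hmax huK⟩
  calc sSup ((fun lam => f lam z) '' K) = f lam z := hsup
    _ < a * f lam x + b * f lam y := by
        have := (hconv lam hlamK).2 (mem_univ x) (mem_univ y) hxy ha hb hab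
        simpa using this
    _ ≤ a * sSup ((fun lam => f lam x) '' K) + b * sSup ((fun lam => f lam y) '' K) := by
        gcongr
        · exact le_csSup (hbdd x) ⟨lam, hlamK, rfl⟩
        · exact le_csSup (hbdd y) ⟨lam, hlamK, rfl⟩
    _ = a • sSup ((fun lam => f lam x) '' K) + b • sSup ((fun lam => f lam y) '' K) := by
        simp [smul_eq_mul]
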